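/- arXiv:2105.14435 — 8 statements merged into one kernel-verified Lean document; each statement's English description precedes it below -/
import Mathlib

section
/- Let S be a POPS in which multiplication is strict (x ∘ ⊥ = ⊥ for all x). Then the subset S + ⊥ := {x + ⊥ : x ∈ S}, with the operations + and ∘, forms a commutative semiring with additive identity ⊥ = 0 + ⊥ and multiplicative identity 1 + ⊥; in particular absorption holds: (x+⊥) ∘ ⊥ = ⊥ for all x. -/
/-- A partially ordered pre-semiring (POPS). -/
class POPS (S : Type*) extends AddCommMonoid S, CommMonoid S, PartialOrder S, OrderBot S where
  mul_add : ∀ a b c : S, a * (b + c) = a * b + a * c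
  add_mono : ∀ a b c : S, a ≤ b → a + c ≤ b + c
  mul_mono : ∀ a b c : S, a ≤ b → a * c ≤ b * c

/-- If multiplication in a POPS is strict (`x * ⊥ = ⊥`), then the subset
`S + ⊥ = {x + ⊥ : x ∈ S}` is a commutative semiring under `+` and `*`:
it is closed under both operations, `⊥ = 0 + ⊥` is the additive identity,
`1 + ⊥` is the multiplicative identity, and absorption holds. -/
theorem add_bot_semiring {S : Type*} [POPS S]
    (hstrict : ∀ x : S, x * ⊥ = ⊥) :
    ((0 : S) + ⊥ = ⊥) ∧
    (∀ x y : S, (x + ⊥) + (y + ⊥) = (x + y) + ⊥) ∧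
    (∀ x y : S, (x + ⊥) * (y + ⊥) = (x * y) + ⊥) ∧
    (∀ x : S, (x + ⊥) + ⊥ = x + ⊥) ∧
    (∀ x : S, (x + ⊥) * ((1 : S) + ⊥) = x + ⊥) ∧
    (∀ x : S, (x + ⊥) * ⊥ = ⊥) := by
  have hbb : (⊥ : S) + ⊥ = ⊥ := le_antisymm
    (by simpa using POPS.add_mono (⊥ : S) 0 ⊥ bot_le) bot_le
  have hmul : ∀ x y : S, (x + ⊥) * (y + ⊥) = (x * y) + ⊥ := by
    intro x y
    rw [POPS.mul_add, hstrict, mul_comm (x+⊥) y, POPS.mul_add, hstrict, mul_comm y x,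
      add_assoc, hbb]
  refine ⟨by simp, ?_, hmul, ?_, ?_, fun x => hstrict _⟩
  · intro x y
    rw [add_assoc, add_comm ⊥ (y+⊥), add_assoc, hbb, ← add_assoc]
  · intro x
    rw [add_assoc, hbb]
  · intro x
    rw [hmul, mul_one]
end

section
/- There is no POPS extension of the real semiring (ℝ, +, ×, 0, 1) that is a semiring: if S is a POPS whose underlying pre-semiring structure restricts on ℝ ⊆ S to the usual operations, then the absorption law 0 ∘ x = 0 fails for some x ∈ S. -/
/-- No POPS extension of the real semiring `(ℝ, +, ×, 0, 1)` is a semiring: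
absorption `0 * x = 0` must fail for some `x`. Here `ℝ ⊆ S` is formalized by
an injection `i : ℝ → S` preserving `+`, `*`, `0` and `1`. -/
theorem no_semiring_pops_extension_of_real {S : Type*} [POPS S]
    (i : ℝ → S) (hinj : Function.Injective i)
    (hadd : ∀ a b : ℝ, i (a + b) = i a + i b)
    (hmul : ∀ a b : ℝ, i (a * b) = i a * i b)
    (h0 : i 0 = 0) (h1 : i 1 = 1) :
    ∃ x : S, (0 : S) * x ≠ 0 := by
  by_contra h
  push_neg at h
  set t : S := i (-1) * ⊥ with ht
  -- ⊥ + t = 0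
  have key : ⊥ + t = (0 : S) := by
    have : (0 : S) * ⊥ = ⊥ + t := by
      have e1 : (0 : S) = i 1 + i (-1) := by
        rw [← hadd]; norm_num [h0]
      calc (0 : S) * ⊥ = ⊥ * (i 1 + i (-1)) := by rw [← e1, mul_comm]
        _ = ⊥ * i 1 + ⊥ * i (-1) := POPS.mul_add _ _ _
        _ = ⊥ + t := by rw [h1, mul_one, ht, mul_comm]
    rw [← this, h ⊥]
  -- 0 ≤ t
  have h0t : (0 : S) ≤ t := by
    have := POPS.add_mono (⊥ : S) 0 t bot_le
    rwa [key, zero_add] at this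
  -- t ≤ i (-2)
  have ht2 : t ≤ i (-2) := by
    have := POPS.mul_mono (⊥ : S) (i 2) (i (-1)) bot_le
    rw [mul_comm (⊥ : S), ← hmul] at this
    norm_num at this
    exact this
  -- i 1 ≤ i (-1)
  have h1m1 : i 1 ≤ i (-1) := by
    have a1 : i 1 ≤ t + i 1 := by
      have := POPS.add_mono (0 : S) t (i 1) h0t
      rwa [zero_add] at this
    have a2 : t + i 1 ≤ i (-2) + i 1 := POPS.add_mono _ _ _ ht2
    have a3 : i (-2) + i 1 = i (-1) := by rw [← hadd]; norm_num
    exact le_trans a1 (a3 ▸ a2)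
  -- multiply by i(-1)
  have hm11 : i (-1) ≤ i 1 := by
    have := POPS.mul_mono (i 1) (i (-1)) (i (-1)) h1m1
    rw [h1, one_mul, ← hmul] at this
    norm_num at this
    exact this
  have : i (-1) = i 1 := le_antisymm hm11 h1m1
  have := hinj this
  norm_num at this
end

section
/- Let L₁, L₂ be posets with least elements, and f : L₁ × L₂ → L₁, g : L₁ × L₂ → L₂ be monotone. Suppose for every u ∈ L₁ the function g_u(y) := g(u,y) is q-stable, and F(x) := f(x, g_x^(q)(⊥)) is p-stable. Then the pair (x̄, ȳ) with x̄ := F^(p)(⊥) and ȳ := g_{x̄}^(q)(⊥) is the least fixpoint of h := (f,g) on L₁ × L₂. -/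
section Aux
variable {L₁ L₂ : Type*} [PartialOrder L₁] [OrderBot L₁]
    [PartialOrder L₂] [OrderBot L₂]

lemma gIter_mono (g : L₁ × L₂ → L₂) (hg : Monotone g) (n : ℕ) :
    Monotone (fun x : L₁ => (fun y => g (x, y))^[n] ⊥) := by
  induction n with
  | zero => intro a b _; simp
  | succ n ih =>
    intro a b hab
    simp only [Function.iterate_succ_apply']
    exact hg (Prod.mk_le_mk.mpr ⟨hab, ih hab⟩)

lemma gIter_le (g : L₁ × L₂ → L₂) (hg : Monotone g) (n : ℕ)
    (z₁ : L₁) (z₂ : L₂) (hz : g (z₁, z₂) = z₂) :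
    (fun y => g (z₁, y))^[n] ⊥ ≤ z₂ := by
  induction n with
  | zero => simp
  | succ n ih =>
    rw [Function.iterate_succ_apply']
    calc g (z₁, (fun y => g (z₁, y))^[n] ⊥) ≤ g (z₁, z₂) :=
          hg (Prod.mk_le_mk.mpr ⟨le_rfl, ih⟩)
      _ = z₂ := hz

end Aux

/-- Least fixpoint lemma over a product of posets. If `g_u := g (u, ·)` is
`q`-stable for every `u` and `F x := f (x, g_x^[q] ⊥)` is `p`-stable, then
`(x̄, ȳ)` with `x̄ := F^[p] ⊥` and `ȳ := g_{x̄}^[q] ⊥` is the least fixpoint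
of `h := (f, g)` on `L₁ × L₂`. -/
theorem lfp_product {L₁ L₂ : Type*} [PartialOrder L₁] [OrderBot L₁]
    [PartialOrder L₂] [OrderBot L₂]
    (f : L₁ × L₂ → L₁) (g : L₁ × L₂ → L₂) (hf : Monotone f) (hg : Monotone g)
    (p q : ℕ)
    (hgq : ∀ u : L₁, (fun y => g (u, y))^[q + 1] ⊥ = (fun y => g (u, y))^[q] ⊥)
    (hFp : (fun x => f (x, (fun y => g (x, y))^[q] ⊥))^[p + 1] ⊥ =
           (fun x => f (x, (fun y => g (x, y))^[q] ⊥))^[p] ⊥) :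
    letI F : L₁ → L₁ := fun x => f (x, (fun y => g (x, y))^[q] ⊥)
    letI xbar : L₁ := F^[p] ⊥
    letI ybar : L₂ := (fun y => g (xbar, y))^[q] ⊥
    (f (xbar, ybar) = xbar ∧ g (xbar, ybar) = ybar) ∧
      ∀ z : L₁ × L₂, (f z, g z) = z → (xbar, ybar) ≤ z := by
  set F : L₁ → L₁ := fun x => f (x, (fun y => g (x, y))^[q] ⊥) with hF
  set xbar : L₁ := F^[p] ⊥ with hxbar
  set ybar : L₂ := (fun y => g (xbar, y))^[q] ⊥ with hybar
  have hFmono : Monotone F := fun a b hab =>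
    hf (Prod.mk_le_mk.mpr ⟨hab, gIter_mono g hg q hab⟩)
  have hfix1 : f (xbar, ybar) = xbar := by
    have := hFp
    rw [Function.iterate_succ_apply'] at this
    exact this
  have hfix2 : g (xbar, ybar) = ybar := by
    have := hgq xbar
    rw [Function.iterate_succ_apply'] at this
    exact this
  refine ⟨⟨hfix1, hfix2⟩, ?_⟩
  rintro ⟨z₁, z₂⟩ hz
  have hz1 : f (z₁, z₂) = z₁ := congrArg Prod.fst hz
  have hz2 : g (z₁, z₂) = z₂ := congrArg Prod.snd hz
  have hxall : ∀ n : ℕ, F^[n] ⊥ ≤ z₁ := by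
    intro n
    induction n with
    | zero => simp
    | succ n ih =>
      rw [Function.iterate_succ_apply']
      calc F (F^[n] ⊥) ≤ F z₁ := hFmono ih
        _ ≤ f (z₁, z₂) := hf (Prod.mk_le_mk.mpr ⟨le_rfl, gIter_le g hg q z₁ z₂ hz2⟩)
        _ = z₁ := hz1
  have hx : xbar ≤ z₁ := hxall p
  have hy : ybar ≤ z₂ :=
    le_trans (gIter_mono g hg q hx) (gIter_le g hg q z₁ z₂ hz2)
  exact Prod.mk_le_mk.mpr ⟨hx, hy⟩
end

section
/- Under the hypotheses of the symmetric fixpoint lemma—f, g monotone with g_u q-stable for all u, F(x) = f(x, g_x^(q)(⊥)) p-stable, f_v(x) := f(x,v) p-stable for all v, and G(y) := g(f_y^(p)(⊥), y) q-stable—the function h = (f,g) : L₁×L₂ → L₁×L₂ is (pq + max(p,q))-stable. -/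
private lemma iter_le_of_le {α : Type*} [Preorder α]
    (φ ψ : α → α) (hψ : Monotone ψ) (hφψ : ∀ a, φ a ≤ ψ a) :
    ∀ n : ℕ, ∀ a b : α, a ≤ b → φ^[n] a ≤ ψ^[n] b := by
  intro n
  induction n with
  | zero => intro a b hab; simpa using hab
  | succ n ih =>
    intro a b hab
    rw [Function.iterate_succ_apply', Function.iterate_succ_apply']
    exact (hφψ _).trans (hψ (ih a b hab))

private lemma iter_bot_le {α : Type*} [Preorder α] [OrderBot α]
    {φ : α → α} (hφ : Monotone φ) {c : α} (hc : φ c ≤ c) (n : ℕ) :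
    φ^[n] ⊥ ≤ c := by
  induction n with
  | zero => exact bot_le
  | succ n ih =>
    rw [Function.iterate_succ_apply']
    exact (hφ ih).trans hc

/-- Symmetric fixpoint lemma: if `g_u := g (u, ·)` is `q`-stable for all `u`,
`F x := f (x, g_x^[q] ⊥)` is `p`-stable, `f_v := f (·, v)` is `p`-stable for
all `v`, and `G y := g (f_y^[p] ⊥, y)` is `q`-stable, then
`h = (f, g) : L₁ × L₂ → L₁ × L₂` is `(pq + max p q)`-stable. -/
theorem symmetric_stability {L₁ L₂ : Type*} [PartialOrder L₁] [OrderBot L₁]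
    [PartialOrder L₂] [OrderBot L₂]
    (f : L₁ × L₂ → L₁) (g : L₁ × L₂ → L₂) (hf : Monotone f) (hg : Monotone g)
    (p q : ℕ)
    (hgq : ∀ u : L₁, (fun y => g (u, y))^[q + 1] ⊥ = (fun y => g (u, y))^[q] ⊥)
    (hFp : (fun x => f (x, (fun y => g (x, y))^[q] ⊥))^[p + 1] ⊥ =
           (fun x => f (x, (fun y => g (x, y))^[q] ⊥))^[p] ⊥)
    (hfp : ∀ v : L₂, (fun x => f (x, v))^[p + 1] ⊥ = (fun x => f (x, v))^[p] ⊥)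
    (hGq : (fun y => g ((fun x => f (x, y))^[p] ⊥, y))^[q + 1] ⊥ =
           (fun y => g ((fun x => f (x, y))^[p] ⊥, y))^[q] ⊥) :
    (fun z : L₁ × L₂ => (f z, g z))^[p * q + max p q + 1] ⊥ =
      (fun z : L₁ × L₂ => (f z, g z))^[p * q + max p q] ⊥ := by
  set h : L₁ × L₂ → L₁ × L₂ := fun z => (f z, g z) with hh_def
  have hh : Monotone h := fun z z' hz => ⟨hf hz, hg hz⟩
  -- monotone of the various single-variable maps
  set F : L₁ → L₁ := fun x => f (x, (fun y => g (x, y))^[q] ⊥) with hF_def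
  set G : L₂ → L₂ := fun y => g ((fun x => f (x, y))^[p] ⊥, y) with hG_def
  have hgmono : ∀ u : L₁, Monotone (fun y => g (u, y)) :=
    fun u y y' hy => hg ⟨le_rfl, hy⟩
  have hfmono : ∀ v : L₂, Monotone (fun x => f (x, v)) :=
    fun v x x' hx => hf ⟨hx, le_rfl⟩
  have hgcomp : ∀ {u u' : L₁}, u ≤ u' → ∀ n : ℕ,
      (fun y => g (u, y))^[n] ⊥ ≤ (fun y => g (u', y))^[n] ⊥ := by
    intro u u' hu n
    exact iter_le_of_le _ _ (hgmono u')
      (fun a => hg (show ((u, a) : L₁ × L₂) ≤ (u', a) from ⟨hu, le_rfl⟩)) n ⊥ ⊥ le_rfl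
  have hFmono : Monotone F := by
    intro x x' hx
    exact hf ⟨hx, hgcomp hx q⟩
  -- the canonical fixed point
  set xs : L₁ := F^[p] ⊥ with hxs_def
  set ys : L₂ := (fun y => g (xs, y))^[q] ⊥ with hys_def
  have hfix1 : f (xs, ys) = xs := by
    have : F xs = xs := by
      rw [hxs_def, ← Function.iterate_succ_apply' F p ⊥]; exact hFp
    exact this
  have hfix2 : g (xs, ys) = ys := by
    have := hgq xs
    rw [Function.iterate_succ_apply'] at this
    exact this
  have hfixh : h (xs, ys) = (xs, ys) := by
    simp [hh_def, hfix1, hfix2]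
  -- upper bound: all iterates are below (xs, ys)
  have hupper : ∀ n : ℕ, h^[n] ⊥ ≤ (xs, ys) :=
    fun n => iter_bot_le hh (le_of_eq hfixh) n
  -- the symmetric fixed point
  set yss : L₂ := G^[q] ⊥ with hyss_def
  set xss : L₁ := (fun x => f (x, yss))^[p] ⊥ with hxss_def
  have hfix2' : g (xss, yss) = yss := by
    have : G yss = yss := by
      rw [hyss_def, ← Function.iterate_succ_apply' G q ⊥]; exact hGq
    exact this
  have hfix1' : f (xss, yss) = xss := by
    have := hfp yss
    rw [Function.iterate_succ_apply'] at this
    exact this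
  -- (xs, ys) is below (xss, yss)
  have hgq_le : (fun y => g (xss, y))^[q] ⊥ ≤ yss :=
    iter_bot_le (hgmono xss) (le_of_eq hfix2') q
  have hFxss : F xss ≤ xss := by
    have : F xss ≤ f (xss, yss) := hf ⟨le_rfl, hgq_le⟩
    rwa [hfix1'] at this
  have hxs_le : xs ≤ xss := iter_bot_le hFmono hFxss p
  have hys_le : ys ≤ yss := (hgcomp hxs_le q).trans hgq_le
  -- iterates of h are increasing
  have hstep : ∀ n : ℕ, h^[n] ⊥ ≤ h^[n + 1] ⊥ := by
    intro n
    induction n with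
    | zero => exact bot_le
    | succ n ih =>
      rw [Function.iterate_succ_apply', Function.iterate_succ_apply']
      exact hh ih
  have hLmono : Monotone (fun n => h^[n] (⊥ : L₁ × L₂)) :=
    monotone_nat_of_le_succ hstep
  -- lemma B: inner g-iterates are dominated by the second components
  have B : ∀ (u : L₁) (m : ℕ), u ≤ (h^[m] ⊥).1 →
      ∀ j : ℕ, (fun y => g (u, y))^[j] ⊥ ≤ (h^[m + j] ⊥).2 := by
    intro u m hu j
    induction j with
    | zero => exact bot_le
    | succ j ih =>
      have h1 : u ≤ (h^[m + j] ⊥).1 := hu.trans (hLmono (Nat.le_add_right m j)).1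
      have : g (u, (fun y => g (u, y))^[j] ⊥) ≤ g (h^[m + j] ⊥) :=
        hg (show ((u, _) : L₁ × L₂) ≤ h^[m + j] ⊥ from ⟨h1, ih⟩)
      rw [Function.iterate_succ_apply', show m + (j + 1) = (m + j) + 1 by omega,
        Function.iterate_succ_apply']
      exact this
  -- lemma B': inner f-iterates are dominated by the first components
  have B' : ∀ (v : L₂) (m : ℕ), v ≤ (h^[m] ⊥).2 →
      ∀ j : ℕ, (fun x => f (x, v))^[j] ⊥ ≤ (h^[m + j] ⊥).1 := by
    intro v m hv j
    induction j with
    | zero => exact bot_le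
    | succ j ih =>
      have h2 : v ≤ (h^[m + j] ⊥).2 := hv.trans (hLmono (Nat.le_add_right m j)).2
      have : f ((fun x => f (x, v))^[j] ⊥, v) ≤ f (h^[m + j] ⊥) :=
        hf (show ((_, v) : L₁ × L₂) ≤ h^[m + j] ⊥ from ⟨ih, h2⟩)
      rw [Function.iterate_succ_apply', show m + (j + 1) = (m + j) + 1 by omega,
        Function.iterate_succ_apply']
      exact this
  -- lemma C: F iterates dominated by the first components
  have C : ∀ k : ℕ, F^[k] ⊥ ≤ (h^[(q + 1) * k] ⊥).1 := by
    intro k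
    induction k with
    | zero => exact bot_le
    | succ k ih =>
      have hB := B (F^[k] ⊥) ((q + 1) * k) ih q
      have : F (F^[k] ⊥) ≤ f (h^[(q + 1) * k + q] ⊥) := by
        refine hf (show ((F^[k] ⊥, _) : L₁ × L₂) ≤ h^[(q + 1) * k + q] ⊥ from
          ⟨ih.trans (hLmono (Nat.le_add_right _ q)).1, hB⟩)
      rw [Function.iterate_succ_apply',
        show (q + 1) * (k + 1) = ((q + 1) * k + q) + 1 by ring,
        Function.iterate_succ_apply']
      exact this
  -- lemma C': G iterates dominated by the second components
  have C' : ∀ k : ℕ, G^[k] ⊥ ≤ (h^[(p + 1) * k] ⊥).2 := by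
    intro k
    induction k with
    | zero => exact bot_le
    | succ k ih =>
      have hB := B' (G^[k] ⊥) ((p + 1) * k) ih p
      have : G (G^[k] ⊥) ≤ g (h^[(p + 1) * k + p] ⊥) := by
        refine hg (show ((_, G^[k] ⊥) : L₁ × L₂) ≤ h^[(p + 1) * k + p] ⊥ from
          ⟨hB, ih.trans (hLmono (Nat.le_add_right _ p)).2⟩)
      rw [Function.iterate_succ_apply',
        show (p + 1) * (k + 1) = ((p + 1) * k + p) + 1 by ring,
        Function.iterate_succ_apply']
      exact this
  -- put it together
  set N : ℕ := p * q + max p q with hN_def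
  have hNp : (q + 1) * p ≤ N := by
    have := Nat.le_max_left p q
    simp only [hN_def]; nlinarith
  have hNq : (p + 1) * q ≤ N := by
    have := Nat.le_max_right p q
    simp only [hN_def]; nlinarith
  have hkey : h^[N] ⊥ = (xs, ys) := by
    refine le_antisymm (hupper N) ?_
    constructor
    · exact (C p).trans (hLmono hNp).1
    · exact (hys_le.trans ((C' q).trans (hLmono hNq).2) : ys ≤ _) |>.trans le_rfl
  calc h^[N + 1] ⊥ = h (h^[N] ⊥) := Function.iterate_succ_apply' h N ⊥
    _ = (xs, ys) := by rw [hkey, hfixh]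
    _ = h^[N] ⊥ := hkey.symm
end

section
/- Let S be a distributive dioid with difference operator b − a := ⋀{c : a + c ⊒ b}. Then for all a, b, c ∈ S: (a + b) − (a + c) = b − (a + c). -/
/-- In a distributive dioid with difference `b − a := ⋀{c : b ⊑ a + c}`, we
have `(a + b) − (a + c) = b − (a + c)` for all `a, b, c`. -/
theorem dioid_minus_absorb {S : Type*} [CommSemiring S] [CompleteLattice S]
    (hidem : ∀ a : S, a + a = a)
    (horder : ∀ a b : S, a ≤ b ↔ a + b = b)
    (hdist : ∀ (a : S) (C : Set S), a + sInf C = sInf ((fun c => a + c) '' C)) :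
    ∀ a b c : S,
      sInf {d : S | a + b ≤ (a + c) + d} = sInf {d : S | b ≤ (a + c) + d} := by
  intro a b c
  congr 1
  ext d
  simp only [Set.mem_setOf_eq]
  constructor
  · intro h
    have hb : b ≤ a + b := by
      rw [horder]
      calc b + (a + b) = a + (b + b) := by ring
        _ = a + b := by rw [hidem]
    exact le_trans hb h
  · intro h
    rw [horder] at h ⊢
    calc a + b + (a + c + d) = a + (b + (a + c + d)) := by ring
      _ = a + (a + c + d) := by rw [h]
      _ = (a + a) + c + d := by ring
      _ = a + c + d := by rw [hidem]
end

section
/- Let S be a commutative semiring and let a ∈ S be p-stable, meaning that a^(p) := 1 + a + a² + ⋯ + a^p satisfies a^(p+1-sum) = a^(p) (i.e., 1 + a + ⋯ + a^(p+1) = 1 + a + ⋯ + a^p). Then for the affine function f(x) = a₀ + a₁x with a₁ p-stable, f is (p+1)-stable: f^(p+2)(0) = f^(p+1)(0) = a₀∘(1 + a₁ + a₁² + ⋯ + a₁^p). -/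
lemma affine_iter {S : Type*} [CommSemiring S] (a₀ a₁ : S) (n : ℕ) :
    (fun x => a₀ + a₁ * x)^[n] 0 = a₀ * ∑ i ∈ Finset.range n, a₁ ^ i := by
  induction n with
  | zero => simp
  | succ n ih =>
    rw [Function.iterate_succ_apply', ih, Finset.sum_range_succ']
    simp only [Finset.mul_sum, mul_add, mul_one, pow_succ, pow_zero]
    rw [add_comm]
    congr 1
    apply Finset.sum_congr rfl
    intros; ring

/-- In a commutative semiring, if `a₁` is `p`-stable (the partial sums
`1 + a₁ + ⋯ + a₁^p` and `1 + a₁ + ⋯ + a₁^(p+1)` coincide), then the affine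
map `f x = a₀ + a₁ x` is `(p+1)`-stable and
`f^[p+1] 0 = a₀ (1 + a₁ + ⋯ + a₁^p)`. -/
theorem affine_stable {S : Type*} [CommSemiring S] (p : ℕ) (a₀ a₁ : S)
    (hstable : ∑ i ∈ Finset.range (p + 2), a₁ ^ i = ∑ i ∈ Finset.range (p + 1), a₁ ^ i) :
    letI f : S → S := fun x => a₀ + a₁ * x
    f^[p + 2] 0 = f^[p + 1] 0 ∧
      f^[p + 1] 0 = a₀ * ∑ i ∈ Finset.range (p + 1), a₁ ^ i := by
  refine ⟨?_, ?_⟩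
  · rw [affine_iter, affine_iter, hstable]
  · rw [affine_iter]
end

section
/- Consider the context-free grammar with one nonterminal x and productions x → aᵢ x^i for each i = 0,…,k (terminal aᵢ followed by i copies of x). A commutative monomial a₀^{r₀} a₁^{r₁} ⋯ aₖ^{rₖ} is derivable (i.e., is the multiset of terminal labels of some derivation tree) if and only if r₀ = 1 + Σ_{i=1}^{k} (i−1)·rᵢ. -/
/-- `Derivable k r` says that the commutative monomial with degree vector `r`
(where `r i` is the number of occurrences of the terminal `aᵢ`) is the
multiset of labels of some derivation tree of the grammar with productions
`x → aᵢ x^i` for `i = 0, …, k`: a tree whose root is labeled `aᵢ` (for some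
`i ≤ k`) has exactly `i` derivation subtrees. -/
inductive Derivable (k : ℕ) : (ℕ → ℕ) → Prop
  | node (i : ℕ) (hik : i ≤ k) (t : Fin i → ℕ → ℕ)
      (ht : ∀ j : Fin i, Derivable k (t j)) :
      Derivable k (fun m => (if m = i then 1 else 0) + ∑ j : Fin i, t j m)

lemma derivable_forward (k : ℕ) (r : ℕ → ℕ) (h : Derivable k r) :
    r 0 = 1 + ∑ i ∈ Finset.Icc 1 k, (i - 1) * r i := by
  induction h with
  | node i hik t ht ih =>
    simp only
    have hsum : ∀ l, (l - 1) * ((if l = i then 1 else 0) + ∑ j : Fin i, t j l)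
        = (if l = i then l - 1 else 0) + ∑ j : Fin i, (l - 1) * t j l := by
      intro l
      rw [Nat.mul_add, Finset.mul_sum]
      split <;> simp
    simp only [hsum, Finset.sum_add_distrib]
    rw [Finset.sum_comm]
    simp only [ih]
    rcases Nat.eq_zero_or_pos i with hi | hi
    · subst hi; simp
    · have h1 : (if (0:ℕ) = i then 1 else 0) = 0 := if_neg hi.ne
      have h2 : ∑ l ∈ Finset.Icc 1 k, (if l = i then l - 1 else 0) = i - 1 := by
        rw [Finset.sum_ite_eq' (Finset.Icc 1 k) i (fun l => l - 1)]
        rw [if_pos (Finset.mem_Icc.mpr ⟨hi, hik⟩)]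
      rw [h1, h2]
      simp [Finset.sum_add_distrib, Finset.card_univ]
      omega

lemma derivable_graft (k i : ℕ) (hi : 1 ≤ i) (hik : i ≤ k) (r : ℕ → ℕ)
    (h : Derivable k r) :
    Derivable k (fun m => (if m = i then 1 else 0) + ((if m = 0 then i - 1 else 0) + r m)) := by
  have := Derivable.node (k := k) i hik
    (fun j => if (j : ℕ) = 0 then r else (fun m => if m = 0 then 1 else 0))
    (by
      intro j
      split
      · exact h
      · have h0 := Derivable.node (k := k) 0 (Nat.zero_le k) (fun _ _ => 0)
          (fun j => j.elim0)
        simpa using h0)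
  convert this using 1
  funext m
  congr 1
  simp only [apply_ite (fun f : ℕ → ℕ => f m)]
  rw [Fin.sum_univ_eq_sum_range (fun j => if j = 0 then r m else if m = 0 then 1 else 0)]
  rcases Nat.exists_eq_add_of_le hi with ⟨c, rfl⟩
  rw [show 1 + c = c + 1 from Nat.add_comm 1 c, Finset.sum_range_succ']
  simp [Finset.sum_ite_eq]

lemma derivable_backward (k : ℕ) : ∀ n (r : ℕ → ℕ), (∀ m, k < m → r m = 0) →
    (∑ i ∈ Finset.Icc 1 k, r i) = n →
    r 0 = 1 + ∑ i ∈ Finset.Icc 1 k, (i - 1) * r i → Derivable k r := by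
  intro n
  induction n with
  | zero =>
    intro r hsupp hn hdeg
    have hz : ∀ i, 1 ≤ i → i ≤ k → r i = 0 := by
      intro i h1 h2
      have := Finset.sum_eq_zero_iff.mp hn i (Finset.mem_Icc.mpr ⟨h1, h2⟩)
      exact this
    have hr : r = fun m => (if m = 0 then 1 else 0) + ∑ j : Fin 0, r m := by
      funext m
      simp only [Finset.univ_eq_empty, Finset.sum_empty, Nat.add_zero]
      rcases Nat.eq_zero_or_pos m with rfl | hm
      · have hz2 : ∑ i ∈ Finset.Icc 1 k, (i - 1) * r i = 0 :=
          Finset.sum_eq_zero fun i hi => by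
            rw [hz i (Finset.mem_Icc.mp hi).1 (Finset.mem_Icc.mp hi).2, Nat.mul_zero]
        rw [hdeg, hz2]
        simp
      · rw [if_neg hm.ne']
        rcases le_or_gt m k with h | h
        · exact hz m hm h
        · exact hsupp m h
    rw [hr]
    exact Derivable.node 0 (Nat.zero_le k) _ (fun j => absurd j.2 (by simp))
  | succ n ih =>
    intro r hsupp hn hdeg
    have : ∃ i ∈ Finset.Icc 1 k, r i ≠ 0 := by
      by_contra hc
      push_neg at hc
      rw [Finset.sum_eq_zero hc] at hn
      omega
    obtain ⟨i, hi, hri⟩ := this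
    obtain ⟨hi1, hik⟩ := Finset.mem_Icc.mp hi
    have hr0 : i - 1 ≤ r 0 := by
      have : (i - 1) * r i ≤ ∑ j ∈ Finset.Icc 1 k, (j - 1) * r j :=
        Finset.single_le_sum (f := fun j => (j - 1) * r j) (fun j _ => Nat.zero_le _) hi
      have : i - 1 ≤ (i - 1) * r i := Nat.le_mul_of_pos_right _ (Nat.pos_of_ne_zero hri)
      omega
    set r' : ℕ → ℕ := fun m => if m = i then r i - 1 else if m = 0 then r 0 - (i - 1) else r m
      with hr'
    have hsum' : ∀ (f : ℕ → ℕ), ∑ j ∈ Finset.Icc 1 k, f j * r' j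
        = (∑ j ∈ Finset.Icc 1 k, f j * r j) - f i := by
      intro f
      have : ∀ j ∈ Finset.Icc 1 k, f j * r' j
          = f j * r j - (if j = i then f i else 0) := by
        intro j hj
        have hj1 := (Finset.mem_Icc.mp hj).1
        simp only [hr']
        rcases eq_or_ne j i with rfl | hne
        · simp [Nat.mul_sub, Nat.mul_one]
        · rw [if_neg hne, if_neg (by omega), if_neg hne, Nat.sub_zero]
      rw [Finset.sum_congr rfl this, Finset.sum_tsub_distrib, Finset.sum_ite_eq' _ i, if_pos hi]
      intro j hj
      split
      · subst j
        exact Nat.le_mul_of_pos_right _ (Nat.pos_of_ne_zero hri)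
      · exact Nat.zero_le _
    have h1 : ∀ m, k < m → r' m = 0 := by
      intro m hm
      simp only [hr']
      rw [if_neg (by omega), if_neg (by omega)]
      exact hsupp m hm
    have h2 : ∑ j ∈ Finset.Icc 1 k, r' j = n := by
      have := hsum' (fun _ => 1)
      simp only [Nat.one_mul] at this
      rw [this, hn]
      omega
    have h3 : r' 0 = 1 + ∑ j ∈ Finset.Icc 1 k, (j - 1) * r' j := by
      have e0 : r' 0 = r 0 - (i - 1) := by
        have hrfl : r' 0 = if (0:ℕ) = i then r i - 1 else if (0:ℕ) = 0 then r 0 - (i - 1) else r 0 := rfl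
        rw [hrfl, if_neg (show ¬(0:ℕ) = i by omega), if_pos rfl]
      rw [e0, hsum' (fun j => j - 1)]
      have : (i - 1) * r i ≤ ∑ j ∈ Finset.Icc 1 k, (j - 1) * r j :=
        Finset.single_le_sum (f := fun j => (j - 1) * r j) (fun j _ => Nat.zero_le _) hi
      have : i - 1 ≤ (i - 1) * r i := Nat.le_mul_of_pos_right _ (Nat.pos_of_ne_zero hri)
      omega
    have hder := derivable_graft k i hi1 hik r' (ih r' h1 h2 h3)
    convert hder using 1
    funext m
    simp only [hr']
    rcases eq_or_ne m i with rfl | hne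
    · rw [if_pos rfl, if_pos rfl, if_neg (by omega)]
      omega
    · rw [if_neg hne, if_neg hne]
      rcases eq_or_ne m 0 with rfl | hne0
      · rw [if_pos rfl, if_pos rfl]; omega
      · rw [if_neg hne0, if_neg hne0]; omega

/-- A monomial `a₀^{r₀} ⋯ aₖ^{rₖ}` is derivable in the grammar with
productions `x → aᵢ x^i` (for `i = 0, …, k`) if and only if
`r₀ = 1 + Σ_{i=1}^{k} (i−1)·rᵢ`. -/
theorem derivable_iff_degree_condition (k : ℕ) (r : ℕ → ℕ)
    (hsupp : ∀ m : ℕ, k < m → r m = 0) :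
    Derivable k r ↔ r 0 = 1 + ∑ i ∈ Finset.Icc 1 k, (i - 1) * r i := by
  constructor
  · exact derivable_forward k r
  · exact derivable_backward k _ r hsupp rfl
end

section
/- Fix p ≥ 0 and let Trop⁺ₚ be the structure whose elements are multisets of size p+1 over ℝ₊ ∪ {∞}, with x ⊕ y := minₚ(x ⊎ y) (the p+1 smallest elements of the multiset union) and x ⊗ y := minₚ(x + y) (the p+1 smallest pairwise sums), zero 0ₚ = {∞,…,∞} and one 1ₚ = {0,∞,…,∞}. Then the identities minₚ(minₚ(x) ⊎ minₚ(y)) = minₚ(x ⊎ y) and minₚ(minₚ(x) + minₚ(y)) = minₚ(x + y) hold for all finite multisets x, y of size ≥ p+1, and consequently Trop⁺ₚ is a commutative semiring. -/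
open scoped Classical

/-- `minp p x` retains the `p+1` smallest elements (with multiplicity) of a
multiset `x` over `ℝ₊ ∪ {∞}` (modeled as `ENNReal`). -/
noncomputable def minp (p : ℕ) (x : Multiset ENNReal) : Multiset ENNReal :=
  ((x.sort (· ≤ ·)).take (p + 1) : List ENNReal)

/-- `msum x y` is the multiset of pairwise sums `⟦u + v : u ∈ x, v ∈ y⟧`. -/
noncomputable def msum (x y : Multiset ENNReal) : Multiset ENNReal :=
  x.bind fun u => y.map fun v => u + v

lemma minp_le (p : ℕ) (x : Multiset ENNReal) : minp p x ≤ x := by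
  have h : ((x.sort (· ≤ ·)).take (p + 1) : Multiset ENNReal) ≤ (x.sort (· ≤ ·) : Multiset ENNReal) :=
    Multiset.coe_le.mpr (List.take_sublist _ _).subperm
  simpa [minp, Multiset.sort_eq] using h

lemma minp_card (p : ℕ) (x : Multiset ENNReal) :
    Multiset.card (minp p x) = min (p + 1) (Multiset.card x) := by
  simp [minp]

lemma minp_card' (p : ℕ) (x : Multiset ENNReal) (h : p + 1 ≤ Multiset.card x) :
    Multiset.card (minp p x) = p + 1 := by
  simp [minp_card, h]

lemma sub_minp (p : ℕ) (x : Multiset ENNReal) :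
    x - minp p x = (((x.sort (· ≤ ·)).drop (p + 1) : List ENNReal) : Multiset ENNReal) := by
  set m := minp p x with hm
  set d := (((x.sort (· ≤ ·)).drop (p + 1) : List ENNReal) : Multiset ENNReal) with hd
  have hx : m + d = x := by
    rw [hm, hd, minp, Multiset.coe_add, List.take_append_drop, Multiset.sort_eq]
  rw [← hx]
  exact add_tsub_cancel_left m d

lemma minp_cross (p : ℕ) (x : Multiset ENNReal) :
    ∀ a ∈ minp p x, ∀ b ∈ x - minp p x, a ≤ b := by
  intro a ha b hb
  rw [sub_minp] at hb
  have hs : (x.sort (· ≤ ·)).Pairwise (· ≤ ·) := Multiset.pairwise_sort _ _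
  rw [← List.take_append_drop (p + 1) (x.sort (· ≤ ·))] at hs
  have := (List.pairwise_append.mp hs).2.2
  exact this a (by simpa [minp] using ha) b (by simpa using hb)

lemma minp_char (p : ℕ) (x t : Multiset ENNReal) (hle : t ≤ x)
    (hcard : Multiset.card t = p + 1)
    (hcross : ∀ a ∈ t, ∀ b ∈ x - t, a ≤ b) : minp p x = t := by
  set L : List ENNReal := t.sort (· ≤ ·) ++ (x - t).sort (· ≤ ·) with hL
  have hsorted : L.Pairwise (· ≤ ·) := by
    rw [List.pairwise_append]
    exact ⟨Multiset.pairwise_sort _ _, Multiset.pairwise_sort _ _,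
      fun a ha b hb => hcross a (by simpa using ha) b (by simpa using hb)⟩
  have hperm : (L : Multiset ENNReal) = x := by
    simp [hL, ← Multiset.coe_add, Multiset.sort_eq, add_tsub_cancel_of_le hle]
  have hx : x.sort (· ≤ ·) = L := by
    apply List.Perm.eq_of_pairwise' (Multiset.pairwise_sort _ _) hsorted
    rw [← Multiset.coe_eq_coe, Multiset.sort_eq, hperm]
  have hlen : (t.sort (· ≤ ·)).length = p + 1 := by simp [hcard]
  rw [minp, hx, hL, List.take_left' hlen, Multiset.sort_eq]

lemma minp_le_of_small (p : ℕ) (z s : Multiset ENNReal) (b : ENNReal)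
    (hs : s ≤ z) (hcard : Multiset.card s = p + 1) (hb : ∀ u ∈ s, u ≤ b) :
    ∀ a ∈ minp p z, a ≤ b := by
  intro a ha
  by_contra hab
  push_neg at hab
  set t := minp p z with ht
  have htz : t ≤ z := minp_le p z
  have hcz : p + 1 ≤ Multiset.card z := hcard ▸ Multiset.card_le_card hs
  have hct : Multiset.card t = p + 1 := minp_card' p z hcz
  -- every element of z - t is > b
  have hrest : ∀ c ∈ z - t, ¬ c ≤ b := by
    intro c hc hcb
    exact absurd (le_trans (minp_cross p z a ha c hc) hcb) (not_le.mpr hab)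
  have hsf : s.filter (· ≤ b) = s := Multiset.filter_eq_self.mpr hb
  have hzsplit : z = t + (z - t) := (add_tsub_cancel_of_le htz).symm
  have hzf : z.filter (· ≤ b) = t.filter (· ≤ b) := by
    conv_lhs => rw [hzsplit]
    rw [Multiset.filter_add, Multiset.filter_eq_nil.mpr hrest, add_zero]
  have hsub : s ≤ t.filter (· ≤ b) := by
    rw [← hzf, ← hsf]
    exact Multiset.filter_le_filter _ hs
  have hcf : Multiset.card (t.filter (· ≤ b)) ≤ p + 1 := by
    rw [← hct]; exact Multiset.card_le_card (Multiset.filter_le _ _)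
  have : t.filter (· ≤ b) = t := by
    apply Multiset.eq_of_le_of_card_le (Multiset.filter_le _ _)
    calc Multiset.card t = p + 1 := hct
    _ = Multiset.card s := hcard.symm
    _ ≤ _ := Multiset.card_le_card hsub
  have ha' : a ∈ t.filter (· ≤ b) := by rw [this]; exact ha
  exact absurd (Multiset.of_mem_filter ha') (not_le.mpr hab)

lemma sub_split (t a r : Multiset ENNReal) (h : t ≤ a) : a + r - t = (a - t) + r := by
  ext c
  have := Multiset.count_le_of_le c h
  simp only [Multiset.count_sub, Multiset.count_add]
  omega

lemma absorb_add (p : ℕ) (x y : Multiset ENNReal) (hx : p + 1 ≤ Multiset.card x) :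
    minp p (minp p x + y) = minp p (x + y) := by
  set m := minp p x with hm
  set r := x - m with hr
  have hmx : m ≤ x := minp_le p x
  have hxmr : x = m + r := (add_tsub_cancel_of_le hmx).symm
  have hcm : Multiset.card m = p + 1 := minp_card' p x hx
  symm
  apply minp_char
  · exact le_trans (minp_le _ _) (add_le_add_left hmx y)
  · apply minp_card'
    rw [Multiset.card_add, hcm]; omega
  · intro a ha b hb
    have hsplit : x + y - minp p (m + y) = (m + y - minp p (m + y)) + r := by
      conv_lhs => rw [hxmr]
      rw [add_right_comm]
      exact sub_split _ _ _ (minp_le _ _)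
    rw [hsplit, Multiset.mem_add] at hb
    rcases hb with hb | hb
    · exact minp_cross p (m + y) a ha b hb
    · have hbm : ∀ u ∈ m, u ≤ b := fun u hu => minp_cross p x u hu b (hr ▸ hb)
      exact minp_le_of_small p (m + y) m b (Multiset.le_add_right _ _) hcm hbm a ha

lemma msum_comm (x y : Multiset ENNReal) : msum x y = msum y x := by
  unfold msum
  induction x using Multiset.induction with
  | empty => simp
  | cons a x ih =>
    rw [Multiset.cons_bind, ih]
    have : (y.bind fun v => (a ::ₘ x).map fun u => v + u)
        = y.bind fun v => (v + a) ::ₘ (x.map fun u => v + u) := by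
      simp
    rw [this]
    have : (y.bind fun v => (v + a) ::ₘ (x.map fun u => v + u))
        = y.bind (fun v => {v + a}) + y.bind fun v => x.map fun u => v + u := by
      rw [← Multiset.bind_add]
      simp [Multiset.singleton_add]
    rw [this, Multiset.bind_singleton]
    congr 1
    apply Multiset.map_congr rfl
    intro v _
    exact add_comm a v

lemma msum_assoc (x y z : Multiset ENNReal) : msum (msum x y) z = msum x (msum y z) := by
  unfold msum
  rw [Multiset.bind_assoc]
  congr 1
  funext u
  rw [Multiset.bind_map, Multiset.map_bind]
  congr 1
  funext v
  rw [Multiset.map_map]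
  apply Multiset.map_congr rfl
  intro w _
  exact add_assoc u v w

lemma msum_add (x y z : Multiset ENNReal) : msum x (y + z) = msum x y + msum x z := by
  unfold msum
  rw [← Multiset.bind_add]
  congr 1
  funext u
  rw [Multiset.map_add]

lemma card_msum (x y : Multiset ENNReal) :
    Multiset.card (msum x y) = Multiset.card x * Multiset.card y := by
  unfold msum
  rw [Multiset.card_bind]
  simp [Multiset.map_map, Function.comp]

lemma map_le_bind {s : Multiset ENNReal} {f : ENNReal → ENNReal}
    {g : ENNReal → Multiset ENNReal} (h : ∀ a ∈ s, f a ∈ g a) : s.map f ≤ s.bind g := by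
  induction s using Multiset.induction with
  | empty => simp
  | cons a s ih =>
    rw [Multiset.map_cons, Multiset.cons_bind]
    have h1 : f a ::ₘ s.map f = {f a} + s.map f := by simp
    rw [h1]
    exact add_le_add (Multiset.singleton_le.mpr (h a (Multiset.mem_cons_self a s)))
      (ih fun b hb => h b (Multiset.mem_cons_of_mem hb))

lemma absorb_msum (p : ℕ) (x y : Multiset ENNReal) (hx : p + 1 ≤ Multiset.card x)
    (hy : 1 ≤ Multiset.card y) :
    minp p (msum (minp p x) y) = minp p (msum x y) := by
  set m := minp p x with hm
  set r := x - m with hr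
  have hmx : m ≤ x := minp_le p x
  have hxmr : x = m + r := (add_tsub_cancel_of_le hmx).symm
  have hcm : Multiset.card m = p + 1 := minp_card' p x hx
  have hdecomp : msum x y = msum m y + msum r y := by
    conv_lhs => rw [hxmr]
    unfold msum
    rw [Multiset.add_bind]
  symm
  apply minp_char
  · exact le_trans (minp_le _ _) (hdecomp ▸ Multiset.le_add_right _ _)
  · apply minp_card'
    rw [card_msum, hcm]
    calc p + 1 = (p + 1) * 1 := (mul_one _).symm
    _ ≤ (p + 1) * Multiset.card y := by exact Nat.mul_le_mul_left _ hy
  · intro a ha b hb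
    have hsplit : msum x y - minp p (msum m y) = (msum m y - minp p (msum m y)) + msum r y := by
      rw [hdecomp]
      exact sub_split _ _ _ (minp_le _ _)
    rw [hsplit, Multiset.mem_add] at hb
    rcases hb with hb | hb
    · exact minp_cross p (msum m y) a ha b hb
    · obtain ⟨u, hu, hb⟩ := Multiset.mem_bind.mp hb
      obtain ⟨v, hv, rfl⟩ := Multiset.mem_map.mp hb
      have hle : m.map (fun w => w + v) ≤ msum m y :=
        map_le_bind fun w _ => Multiset.mem_map.mpr ⟨v, hv, rfl⟩
      apply minp_le_of_small p (msum m y) (m.map fun w => w + v) (u + v) hle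
      · rw [Multiset.card_map, hcm]
      · intro c hc
        obtain ⟨w, hw, rfl⟩ := Multiset.mem_map.mp hc
        exact add_le_add_left (minp_cross p x w hw u (hr ▸ hu)) v
      · exact ha

lemma minp_pad (p k : ℕ) (x : Multiset ENNReal) (h : Multiset.card x = p + 1) :
    minp p (x + Multiset.replicate k ⊤) = x := by
  apply minp_char
  · exact Multiset.le_add_right _ _
  · exact h
  · intro a _ b hb
    rw [add_tsub_cancel_left] at hb
    rw [Multiset.eq_of_mem_replicate hb]
    exact le_top

lemma minp_self (p : ℕ) (x : Multiset ENNReal) (h : Multiset.card x = p + 1) :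
    minp p x = x := by
  have := minp_pad p 0 x h
  simpa using this

lemma msum_op (p : ℕ) (x : Multiset ENNReal) :
    msum x ((0 : ENNReal) ::ₘ Multiset.replicate p ⊤)
      = x + Multiset.replicate (p * Multiset.card x) ⊤ := by
  unfold msum
  rw [show (x.bind fun u => ((0 : ENNReal) ::ₘ Multiset.replicate p ⊤).map fun v => u + v)
      = x.bind fun u => u ::ₘ Multiset.replicate p ⊤ from
    Multiset.bind_congr (fun u _ => by simp [Multiset.map_replicate])]
  induction x using Multiset.induction with
  | empty => simp
  | cons a x ih =>
    rw [Multiset.cons_bind, ih]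
    simp only [Multiset.card_cons]
    rw [mul_add, mul_one, add_comm (p * Multiset.card x) p, Multiset.replicate_add]
    rw [← Multiset.singleton_add, ← Multiset.singleton_add]
    abel

lemma msum_zp (p n : ℕ) (x : Multiset ENNReal) :
    msum x (Multiset.replicate n ⊤) = Multiset.replicate (Multiset.card x * n) ⊤ := by
  apply Multiset.eq_replicate.mpr
  constructor
  · rw [card_msum, Multiset.card_replicate]
  · intro b hb
    obtain ⟨u, _, hb⟩ := Multiset.mem_bind.mp hb
    obtain ⟨v, hv, rfl⟩ := Multiset.mem_map.mp hb
    rw [Multiset.eq_of_mem_replicate hv]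
    exact add_top u

lemma minp_rep (p n : ℕ) (h : p + 1 ≤ n) :
    minp p (Multiset.replicate n ⊤) = Multiset.replicate (p + 1) (⊤ : ENNReal) := by
  apply minp_char
  · exact (Multiset.replicate_le_replicate _).mpr h
  · exact Multiset.card_replicate _ _
  · intro a ha b hb
    have hb' : b ∈ Multiset.replicate n (⊤ : ENNReal) := Multiset.mem_of_le tsub_le_self hb
    rw [Multiset.eq_of_mem_replicate ha, Multiset.eq_of_mem_replicate hb']

lemma absorb_both (p : ℕ) (x y : Multiset ENNReal) (hx : p + 1 ≤ Multiset.card x)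
    (hy : p + 1 ≤ Multiset.card y) :
    minp p (minp p x + minp p y) = minp p (x + y) := by
  rw [absorb_add p x (minp p y) hx, add_comm, absorb_add p y x hy, add_comm]

lemma absorb_msum_both (p : ℕ) (x y : Multiset ENNReal) (hx : p + 1 ≤ Multiset.card x)
    (hy : p + 1 ≤ Multiset.card y) :
    minp p (msum (minp p x) (minp p y)) = minp p (msum x y) := by
  have hy1 : 1 ≤ Multiset.card (minp p y) := by rw [minp_card' p y hy]; omega
  have hx1 : 1 ≤ Multiset.card x := le_trans (by omega) hx
  rw [absorb_msum p x (minp p y) hx hy1, msum_comm, absorb_msum p y x hy hx1, msum_comm]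

/-- The defining identities of `Trop⁺ₚ` hold (`minₚ` may be deferred to the
end of a computation), and consequently `Trop⁺ₚ` — multisets of size `p+1`
over `ℝ₊ ∪ {∞}` with `x ⊕ y := minₚ(x ⊎ y)`, `x ⊗ y := minₚ(x + y)`,
zero `0ₚ = ⟦∞,…,∞⟧` and one `1ₚ = ⟦0,∞,…,∞⟧` — is a commutative semiring.
(Multiset union `⊎` is written `+` on `Multiset`.) -/
theorem tropP_identities_and_semiring (p : ℕ) :
    (∀ x y : Multiset ENNReal,
      p + 1 ≤ Multiset.card x → p + 1 ≤ Multiset.card y →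
        minp p (minp p x + minp p y) = minp p (x + y) ∧
        minp p (msum (minp p x) (minp p y)) = minp p (msum x y)) ∧
    (letI zp : Multiset ENNReal := Multiset.replicate (p + 1) ⊤
     letI op : Multiset ENNReal := (0 : ENNReal) ::ₘ Multiset.replicate p ⊤
     letI add : Multiset ENNReal → Multiset ENNReal → Multiset ENNReal :=
       fun x y => minp p (x + y)
     letI mul : Multiset ENNReal → Multiset ENNReal → Multiset ENNReal :=
       fun x y => minp p (msum x y)
     (∀ x y : Multiset ENNReal, Multiset.card x = p + 1 → Multiset.card y = p + 1 →
        add x y = add y x ∧ mul x y = mul y x) ∧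
     (∀ x y z : Multiset ENNReal, Multiset.card x = p + 1 →
        Multiset.card y = p + 1 → Multiset.card z = p + 1 →
        add (add x y) z = add x (add y z) ∧
        mul (mul x y) z = mul x (mul y z) ∧
        mul x (add y z) = add (mul x y) (mul x z)) ∧
     (∀ x : Multiset ENNReal, Multiset.card x = p + 1 →
        add x zp = x ∧ mul x op = x ∧ mul x zp = zp)) := by
  constructor
  · intro x y hx hy
    exact ⟨absorb_both p x y hx hy, absorb_msum_both p x y hx hy⟩
  · refine ⟨?_, ?_, ?_⟩
    · intro x y hx hy
      constructor
      · beta_reduce; rw [add_comm]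
      · beta_reduce; rw [msum_comm]
    · intro x y z hx hy hz
      have cxy : p + 1 ≤ Multiset.card (x + y) := by
        rw [Multiset.card_add, hx, hy]; omega
      have cyz : p + 1 ≤ Multiset.card (y + z) := by
        rw [Multiset.card_add, hy, hz]; omega
      have cx : p + 1 ≤ Multiset.card x := hx.ge
      have cy : p + 1 ≤ Multiset.card y := hy.ge
      have cz : p + 1 ≤ Multiset.card z := hz.ge
      have cx1 : 1 ≤ Multiset.card x := by omega
      have cz1 : 1 ≤ Multiset.card z := by omega
      have cmxy : p + 1 ≤ Multiset.card (msum x y) := by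
        rw [card_msum, hx, hy]
        calc p + 1 = (p + 1) * 1 := (mul_one _).symm
        _ ≤ (p + 1) * (p + 1) := Nat.mul_le_mul_left _ (by omega)
      have cmyz : p + 1 ≤ Multiset.card (msum y z) := by
        rw [card_msum, hy, hz]
        calc p + 1 = (p + 1) * 1 := (mul_one _).symm
        _ ≤ (p + 1) * (p + 1) := Nat.mul_le_mul_left _ (by omega)
      have cmxz : p + 1 ≤ Multiset.card (msum x z) := by
        rw [card_msum, hx, hz]
        calc p + 1 = (p + 1) * 1 := (mul_one _).symm
        _ ≤ (p + 1) * (p + 1) := Nat.mul_le_mul_left _ (by omega)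
      refine ⟨?_, ?_, ?_⟩
      · beta_reduce
        rw [absorb_add p (x + y) z cxy,
          add_comm x (minp p (y + z)), absorb_add p (y + z) x cyz,
          add_comm (y + z) x, add_assoc]
      · beta_reduce
        rw [absorb_msum p (msum x y) z cmxy cz1,
          msum_comm x (minp p (msum y z)), absorb_msum p (msum y z) x cmyz cx1,
          msum_comm (msum y z) x, msum_assoc]
      · beta_reduce
        rw [msum_comm x (minp p (y + z)), absorb_msum p (y + z) x cyz cx1,
          msum_comm (y + z) x, msum_add,
          absorb_both p (msum x y) (msum x z) cmxy cmxz]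
    · intro x hx
      refine ⟨minp_pad p (p + 1) x hx, ?_, ?_⟩
      · beta_reduce
        rw [msum_op p x, hx]
        exact minp_pad p (p * (p + 1)) x hx
      · beta_reduce
        rw [msum_zp p (p + 1) x, hx]
        apply minp_rep
        calc p + 1 = (p + 1) * 1 := (mul_one _).symm
        _ ≤ (p + 1) * (p + 1) := Nat.mul_le_mul_left _ (by omega)
end
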